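/- arXiv:math/0104222 — 4 statements merged into one kernel-verified Lean document; each statement's English description precedes it below -/
import Mathlib

section
/- Let 0 < W ≤ d_1 + ⋯ + d_s and let a be the unique positive integer with Σ_{i=a+1}^{μ} i·ν_i < W ≤ Σ_{i=a}^{μ} i·ν_i. Then M(W) = ⌈ (W − Σ_{i=a+1}^{μ} (i−a)·ν_i) / a ⌉; that is, the minimum number of places whose degrees sum to at least W is given by this closed-form ceiling expression. -/
/-- Let `0 < W ≤ d_1 + ⋯ + d_s` and let `a` be the unique positive
integer with `Σ_{i=a+1}^{μ} i·ν_i < W ≤ Σ_{i=a}^{μ} i·ν_i`.  Then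
`M(W) = ⌈ (W − Σ_{i=a+1}^{μ} (i−a)·ν_i) / a ⌉`; i.e., the minimum number of
places whose degrees sum to at least `W` is given by this closed-form ceiling
expression (Remark 2 of the paper: the Özbudak–Stichtenoth bound with
`W = n − deg G`). -/
theorem min_subset_closed_formula
    (s : ℕ) (hs : 0 < s) (d : Fin s → ℕ) (hd : ∀ i, 0 < d i)
    (ν : ℕ → ℕ) (hν : ∀ k, ν k = (Finset.univ.filter (fun j : Fin s => d j = k)).card)
    (μ : ℕ) (hμ : μ = Finset.univ.sup d)
    (W : ℕ) (hW : 0 < W) (hWle : W ≤ ∑ i, d i)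
    (a : ℕ) (ha : 0 < a)
    (halt : ∑ i ∈ Finset.Icc (a + 1) μ, i * ν i < W)
    (hage : W ≤ ∑ i ∈ Finset.Icc a μ, i * ν i) :
    ((sInf {k : ℕ | ∃ S : Finset (Fin s), S.card = k ∧ W ≤ ∑ i ∈ S, d i} : ℕ) : ℤ)
      = ⌈((W : ℚ) - ((∑ i ∈ Finset.Icc (a + 1) μ, (i - a) * ν i : ℕ) : ℚ)) / (a : ℚ)⌉ := by
  classical
  set A : Finset (Fin s) := Finset.univ.filter (fun j => a < d j) with hA
  have hdle : ∀ j : Fin s, d j ≤ μ := by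
    intro j; rw [hμ]; exact Finset.le_sup (Finset.mem_univ j)
  have hmemA : ∀ j ∈ A, a < d j := by
    intro j hj; rw [hA, Finset.mem_filter] at hj; exact hj.2
  have hmaps : ∀ j ∈ A, d j ∈ Finset.Icc (a + 1) μ := fun j hj =>
    Finset.mem_Icc.2 ⟨hmemA j hj, hdle j⟩
  have key : ∀ f : ℕ → ℕ, ∑ j ∈ A, f (d j) = ∑ i ∈ Finset.Icc (a + 1) μ, ν i * f i := by
    intro f
    rw [← Finset.sum_fiberwise_of_maps_to hmaps (fun j => f (d j))]
    refine Finset.sum_congr rfl fun i hi => ?_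
    have hfib : A.filter (fun j => d j = i) = Finset.univ.filter (fun j => d j = i) := by
      ext j
      simp only [hA, Finset.filter_filter, Finset.mem_filter, Finset.mem_univ, true_and]
      have := (Finset.mem_Icc.1 hi).1
      constructor
      · rintro ⟨_, h⟩; exact h
      · intro h; exact ⟨by omega, h⟩
    calc ∑ j ∈ A.filter (fun j => d j = i), f (d j)
        = ∑ _j ∈ A.filter (fun j => d j = i), f i := by
          refine Finset.sum_congr rfl fun j hj => ?_
          rw [(Finset.mem_filter.1 hj).2]
      _ = ν i * f i := by
          rw [Finset.sum_const, smul_eq_mul, hfib, hν i]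
  set T := ∑ i ∈ Finset.Icc (a + 1) μ, i * ν i with hT
  set C := ∑ i ∈ Finset.Icc (a + 1) μ, (i - a) * ν i with hC
  set N := ∑ i ∈ Finset.Icc (a + 1) μ, ν i with hN
  have hTA : ∑ j ∈ A, d j = T := by
    have := key id
    simpa [mul_comm] using this
  have hCA : ∑ j ∈ A, (d j - a) = C := by
    have h := key (fun i => i - a)
    rw [hC, h]
    exact Finset.sum_congr rfl fun i _ => mul_comm _ _
  have hNA : A.card = N := by
    have := key (fun _ => 1)
    simpa using this
  have hTCN : T = C + a * N := by
    rw [← hTA, ← hCA, ← hNA, mul_comm, ← smul_eq_mul, ← Finset.sum_const,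
      ← Finset.sum_add_distrib]
    refine Finset.sum_congr rfl fun j hj => ?_
    have := hmemA j hj
    omega
  -- a ≤ μ
  have haμ : a ≤ μ := by
    by_contra h
    rw [Finset.Icc_eq_empty (by omega), Finset.sum_empty] at hage
    omega
  -- split hage : W ≤ a * ν a + T
  have hage' : W ≤ a * ν a + T := by
    rw [Finset.Icc_eq_cons_Ioc haμ, Finset.sum_cons, ← Finset.Icc_add_one_left_eq_Ioc] at hage
    exact hage
  set B := W - T with hB
  have hWTB : W = T + B := by omega
  have hBpos : 0 < B := by omega
  set q := (B - 1) / a with hqdef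
  have hdm : a * q + (B - 1) % a = B - 1 := Nat.div_add_mod (B - 1) a
  have hmod : (B - 1) % a < a := Nat.mod_lt _ ha
  have hm1 : a * q < B := by
    calc a * q = q * a := mul_comm a q
      _ ≤ B - 1 := Nat.div_mul_le_self (B - 1) a
      _ < B := Nat.pred_lt (Nat.pos_iff_ne_zero.mp hBpos)
  have hm2 : B ≤ a * q + a := by
    have h1 : B - 1 < a * q + a := by
      rw [← hdm]; exact Nat.add_lt_add_left hmod _
    have h2 : B - 1 + 1 ≤ a * q + a := Nat.succ_le_of_lt h1
    calc B = B - 1 + 1 := (Nat.succ_pred_eq_of_pos hBpos).symm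
      _ ≤ a * q + a := h2
  have hBν : B ≤ a * ν a := by
    have h1 : W - T ≤ a * ν a + T - T := Nat.sub_le_sub_right hage' T
    rwa [Nat.add_sub_cancel] at h1
  have hmν : q + 1 ≤ ν a := by
    have h1 : a * q < a * ν a := lt_of_lt_of_le hm1 hBν
    exact Nat.succ_le_of_lt (Nat.lt_of_mul_lt_mul_left h1)
  set K := N + (q + 1) with hK
  -- construction: K is achieved
  obtain ⟨E, hEF, hEcard⟩ := Finset.exists_subset_card_eq
    (s := Finset.univ.filter (fun j : Fin s => d j = a)) (n := q + 1)
    (by rw [← hν a]; exact hmν)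
  have hEd : ∀ j ∈ E, d j = a := by
    intro j hj
    exact (Finset.mem_filter.1 (hEF hj)).2
  have hdisj : Disjoint A E := by
    rw [Finset.disjoint_left]
    intro j hjA hjE
    have h1 := hmemA j hjA
    have h2 := hEd j hjE
    omega
  have hSsum : ∑ j ∈ A ∪ E, d j = T + (a * q + a) := by
    rw [Finset.sum_union hdisj, hTA]
    congr 1
    calc ∑ j ∈ E, d j = ∑ _j ∈ E, a := Finset.sum_congr rfl hEd
      _ = a * (q + 1) := by rw [Finset.sum_const, smul_eq_mul, hEcard, mul_comm]
      _ = a * q + a := by ring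
  have hmem : K ∈ {k : ℕ | ∃ S : Finset (Fin s), S.card = k ∧ W ≤ ∑ i ∈ S, d i} := by
    refine ⟨A ∪ E, ?_, ?_⟩
    · rw [Finset.card_union_of_disjoint hdisj, hNA, hEcard]
    · rw [hSsum, hWTB]
      exact Nat.add_le_add_left hm2 T
  -- lower bound
  have hlb : ∀ k ∈ {k : ℕ | ∃ S : Finset (Fin s), S.card = k ∧ W ≤ ∑ i ∈ S, d i},
      K ≤ k := by
    rintro k ⟨S, hScard, hSW⟩
    have hub : ∑ j ∈ S, d j ≤ C + a * S.card := by
      calc ∑ j ∈ S, d j ≤ ∑ j ∈ S, ((d j - a) + a) :=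
            Finset.sum_le_sum fun j _ => le_tsub_add
        _ = (∑ j ∈ S, (d j - a)) + a * S.card := by
            rw [Finset.sum_add_distrib, Finset.sum_const, smul_eq_mul, mul_comm]
        _ ≤ C + a * S.card := by
            refine Nat.add_le_add_right ?_ _
            calc ∑ j ∈ S, (d j - a) ≤ ∑ j : Fin s, (d j - a) :=
                  Finset.sum_le_sum_of_subset (Finset.subset_univ S)
              _ = C := by
                  rw [← hCA]
                  refine (Finset.sum_subset (Finset.subset_univ A) ?_).symm
                  intro j _ hjA
                  have : ¬ a < d j := by
                    intro hcon
                    exact hjA (by rw [hA]; exact Finset.mem_filter.2 ⟨Finset.mem_univ j, hcon⟩)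
                  omega
    have hWk : W ≤ C + a * k := by
      rw [← hScard]; exact le_trans hSW hub
    have hWeq : W = C + (a * N + B) := by
      rw [hWTB, hTCN]; ring
    have hNBk : a * N + B ≤ a * k := by
      have := hWeq ▸ hWk
      exact Nat.le_of_add_le_add_left this
    by_contra hcon
    push_neg at hcon
    have hk : k ≤ N + q := by omega
    have h1 : a * k ≤ a * N + a * q := by
      calc a * k ≤ a * (N + q) := Nat.mul_le_mul_left a hk
        _ = a * N + a * q := Nat.mul_add a N q
    have h2 : a * N + B ≤ a * N + a * q := le_trans hNBk h1
    have h3 : B ≤ a * q := Nat.le_of_add_le_add_left h2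
    exact absurd hm1 (not_lt.2 h3)
  have hInf : sInf {k : ℕ | ∃ S : Finset (Fin s), S.card = k ∧ W ≤ ∑ i ∈ S, d i} = K :=
    le_antisymm (Nat.sInf_le hmem) (le_csInf ⟨K, hmem⟩ hlb)
  rw [hInf]
  -- ceiling computation
  have haQ : (0 : ℚ) < (a : ℚ) := by exact_mod_cast ha
  symm
  rw [Int.ceil_eq_iff]
  have hup : W ≤ C + a * K := by
    have : W = C + (a * N + B) := by rw [hWTB, hTCN]; ring
    rw [this, hK, Nat.mul_add]
    have : a * N + B ≤ a * N + a * (q + 1) := by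
      refine Nat.add_le_add_left ?_ _
      calc B ≤ a * q + a := hm2
        _ = a * (q + 1) := by ring
    exact Nat.add_le_add_left this C
  have hlow : C + (a * N + a * q) < W := by
    have : W = C + (a * N + B) := by rw [hWTB, hTCN]; ring
    rw [this]
    exact Nat.add_lt_add_left (Nat.add_lt_add_left hm1 _) C
  have hupQ : (W : ℚ) ≤ (C : ℚ) + (a : ℚ) * K := by exact_mod_cast hup
  have hlowQ : (C : ℚ) + ((a : ℚ) * N + (a : ℚ) * q) < W := by exact_mod_cast hlow
  have hKQ : ((K : ℕ) : ℚ) = (N : ℚ) + (q : ℚ) + 1 := by rw [hK]; push_cast; ring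
  constructor
  · rw [lt_div_iff₀ haQ]
    push_cast
    rw [hKQ]
    nlinarith [hlowQ]
  · rw [div_le_iff₀ haQ]
    push_cast
    nlinarith [hupQ, hKQ]
end

section
/- (Proposition 1.) Let x ∈ F^s with φ(x) ≠ 0, put W = w(φ(x)), and let a be the unique positive integer with Σ_{i=a+1}^{μ} i·ν_i < W ≤ Σ_{i=a}^{μ} i·ν_i, where ν_i = #{ j : d_j = i } and μ = max_j d_j. Then w(x) ≥ ⌈ (W − Σ_{i=a+1}^{μ} (i−a)·ν_i) / a ⌉. -/
/-- Proposition 1: Let `x ∈ F^s` with `φ(x) ≠ 0`, put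
`W = w(φ(x))`, and let `a` be the unique positive integer with
`Σ_{i=a+1}^{μ} i·ν_i < W ≤ Σ_{i=a}^{μ} i·ν_i`, where `ν_i = #{ j : d_j = i }`
and `μ = max_j d_j`.  Then `w(x) ≥ ⌈ (W − Σ_{i=a+1}^{μ} (i−a)·ν_i) / a ⌉`. -/
theorem proposition_weight_lower_bound
    (p e m : ℕ) (hp : p.Prime) (he : 0 < e) (hm : 0 < m)
    (q : ℕ) (hq : q = p ^ e)
    (F : Type*) [Field F] [Fintype F] [DecidableEq F]
    (hF : Fintype.card F = q ^ m)
    (σ : F → F) (hσ : ∀ x, σ x = x ^ q)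
    (s : ℕ) (hs : 0 < s) (d : Fin s → ℕ) (hd : ∀ i, 0 < d i)
    (φ : (Fin s → F) → ((Σ i : Fin s, Fin (d i)) → F))
    (hφ : ∀ x (i : Fin s) (j : Fin (d i)), φ x ⟨i, j⟩ = σ^[(j : ℕ)] (x i))
    (ν : ℕ → ℕ) (hν : ∀ k, ν k = (Finset.univ.filter (fun j : Fin s => d j = k)).card)
    (μ : ℕ) (hμ : μ = Finset.univ.sup d)
    (x : Fin s → F) (hx : φ x ≠ 0)
    (W : ℕ)
    (hW : W = (Finset.univ.filter (fun t : Σ i : Fin s, Fin (d i) => φ x t ≠ 0)).card)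
    (a : ℕ) (ha : 0 < a)
    (halt : ∑ i ∈ Finset.Icc (a + 1) μ, i * ν i < W)
    (hage : W ≤ ∑ i ∈ Finset.Icc a μ, i * ν i) :
    ⌈((W : ℚ) - ((∑ i ∈ Finset.Icc (a + 1) μ, (i - a) * ν i : ℕ) : ℚ)) / (a : ℚ)⌉
      ≤ ((Finset.univ.filter (fun i : Fin s => x i ≠ 0)).card : ℤ) := by

  classical
  have hq0 : 0 < q := by subst hq; exact pow_pos hp.pos e
  have hiter : ∀ (j : ℕ) (y : F), σ^[j] y = 0 ↔ y = 0 := by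
    intro j
    induction j with
    | zero => intro y; simp
    | succ n ih =>
      intro y
      rw [Function.iterate_succ_apply, ih, hσ, pow_eq_zero_iff hq0.ne']
  set S := Finset.univ.filter (fun i : Fin s => x i ≠ 0) with hS
  set N := S.card with hN
  have hWsum : W = ∑ i ∈ S, d i := by
    rw [hW]
    have hfe : (Finset.univ.filter (fun t : Σ i : Fin s, Fin (d i) => φ x t ≠ 0))
        = S.sigma (fun i => Finset.univ) := by
      ext ⟨i, j⟩
      simp [hS, Finset.mem_sigma, hφ, hiter]
    rw [hfe, Finset.card_sigma]
    simp
  have hdle : ∀ j : Fin s, d j ≤ μ := by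
    intro j; rw [hμ]; exact Finset.le_sup (Finset.mem_univ j)
  have hgroup : ∑ i ∈ Finset.Icc (a + 1) μ, (i - a) * ν i
      = ∑ j : Fin s, (d j - a) := by
    have h1 : ∑ i ∈ Finset.range (μ + 1), (i - a) * ν i
        = ∑ j : Fin s, (d j - a) := by
      rw [← Finset.sum_fiberwise_of_maps_to (g := d) (t := Finset.range (μ + 1))
        (fun j _ => Finset.mem_range.mpr (Nat.lt_succ_of_le (hdle j)))
        (fun j => d j - a)]
      refine Finset.sum_congr rfl fun i _ => ?_
      calc (i - a) * ν i
          = ∑ _j ∈ Finset.univ.filter (fun j => d j = i), (i - a) := by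
            rw [Finset.sum_const, hν, smul_eq_mul, mul_comm]
        _ = ∑ j ∈ Finset.univ.filter (fun j => d j = i), (d j - a) :=
            Finset.sum_congr rfl (fun j hj => by
              rw [(Finset.mem_filter.mp hj).2])
    rw [← h1]
    refine Finset.sum_subset ?_ ?_
    · intro i hi
      exact Finset.mem_range.mpr (Nat.lt_succ_of_le (Finset.mem_Icc.mp hi).2)
    · intro i hi hni
      have hile : i ≤ μ := Nat.lt_succ_iff.mp (Finset.mem_range.mp hi)
      have : i ≤ a := by
        by_contra h
        exact hni (Finset.mem_Icc.mpr ⟨Nat.succ_le_of_lt (Nat.lt_of_not_le h), hile⟩)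
      simp [Nat.sub_eq_zero_of_le this]
  have hkey : W ≤ a * N + ∑ i ∈ Finset.Icc (a + 1) μ, (i - a) * ν i := by
    rw [hWsum, hgroup]
    calc ∑ i ∈ S, d i ≤ ∑ i ∈ S, (a + (d i - a)) :=
          Finset.sum_le_sum fun i _ => le_add_tsub
      _ = a * N + ∑ i ∈ S, (d i - a) := by
          rw [Finset.sum_add_distrib, Finset.sum_const, smul_eq_mul, mul_comm]
      _ ≤ a * N + ∑ j : Fin s, (d j - a) := by
          exact Nat.add_le_add_left
            (Finset.sum_le_sum_of_subset (Finset.filter_subset _ _)) _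
  rw [Int.ceil_le]
  push_cast
  rw [div_le_iff₀ (by positivity)]
  have hkeyq : (W : ℚ) ≤ a * N + ((∑ i ∈ Finset.Icc (a + 1) μ, (i - a) * ν i : ℕ) : ℚ) := by
    exact_mod_cast hkey
  push_cast at hkeyq
  have : ((Finset.univ.filter (fun i : Fin s => x i ≠ 0)).card : ℚ) = (N : ℚ) := by
    rw [hN, hS]
  rw [this]
  linarith
end

section
/- (Core of the decoding theorem.) Let t be a nonnegative integer with t + 1 ≤ d_1 + ⋯ + d_s, and let a be the unique positive integer with Σ_{i=a+1}^{μ} i·ν_i < t + 1 ≤ Σ_{i=a}^{μ} i·ν_i, where ν_i = #{ j : d_j = i } and μ = max_j d_j. Then for every x ∈ F^s with Hamming weight w(x) ≤ ⌈ (t + 1 − Σ_{i=a+1}^{μ} (i−a)·ν_i) / a ⌉ − 1, the expanded vector satisfies w(φ(x)) ≤ t. (Hence any t-error-correcting algorithm for the expanded code corrects up to ⌈(t+1 − Σ_{i=a+1}^{μ}(i−a)ν_i)/a⌉ − 1 errors of the generalized algebraic geometry code.) -/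
/-- core of the decoding theorem: Let `t ≥ 0` with
`t + 1 ≤ d_1 + ⋯ + d_s`, and let `a` be the unique positive integer with
`Σ_{i=a+1}^{μ} i·ν_i < t + 1 ≤ Σ_{i=a}^{μ} i·ν_i`.  Then for every `x ∈ F^s`
with Hamming weight `w(x) ≤ ⌈(t + 1 − Σ_{i=a+1}^{μ} (i−a)·ν_i)/a⌉ − 1`, the
expanded vector satisfies `w(φ(x)) ≤ t`.  (Hence any `t`-error-correcting
algorithm for the expanded code corrects up to
`⌈(t+1 − Σ_{i=a+1}^{μ}(i−a)ν_i)/a⌉ − 1` errors of the generalized AG code.) -/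
theorem decoding_core
    (p e m : ℕ) (hp : p.Prime) (he : 0 < e) (hm : 0 < m)
    (q : ℕ) (hq : q = p ^ e)
    (F : Type*) [Field F] [Fintype F] [DecidableEq F]
    (hF : Fintype.card F = q ^ m)
    (σ : F → F) (hσ : ∀ x, σ x = x ^ q)
    (s : ℕ) (hs : 0 < s) (d : Fin s → ℕ) (hd : ∀ i, 0 < d i)
    (φ : (Fin s → F) → ((Σ i : Fin s, Fin (d i)) → F))
    (hφ : ∀ x (i : Fin s) (j : Fin (d i)), φ x ⟨i, j⟩ = σ^[(j : ℕ)] (x i))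
    (ν : ℕ → ℕ) (hν : ∀ k, ν k = (Finset.univ.filter (fun j : Fin s => d j = k)).card)
    (μ : ℕ) (hμ : μ = Finset.univ.sup d)
    (t : ℕ) (ht : t + 1 ≤ ∑ i, d i)
    (a : ℕ) (ha : 0 < a)
    (halt : ∑ i ∈ Finset.Icc (a + 1) μ, i * ν i < t + 1)
    (hage : t + 1 ≤ ∑ i ∈ Finset.Icc a μ, i * ν i) :
    ∀ x : Fin s → F,
      ((Finset.univ.filter (fun i : Fin s => x i ≠ 0)).card : ℤ)
          ≤ ⌈(((t : ℚ) + 1) - ((∑ i ∈ Finset.Icc (a + 1) μ, (i - a) * ν i : ℕ) : ℚ))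
              / (a : ℚ)⌉ - 1 →
      (Finset.univ.filter (fun k : Σ i : Fin s, Fin (d i) => φ x k ≠ 0)).card ≤ t := by
  intro x hx
  have hq0 : 0 < q := by subst hq; exact pow_pos hp.pos e
  have hiter : ∀ (n : ℕ) (y : F), σ^[n] y = y ^ q ^ n := by
    intro n
    induction n with
    | zero => simp
    | succ n ih =>
        intro y
        rw [Function.iterate_succ_apply', ih, hσ, ← pow_mul, pow_succ]
  classical
  set E := Finset.univ.filter (fun i : Fin s => x i ≠ 0) with hE
  have hfilter : Finset.univ.filter (fun k : Σ i : Fin s, Fin (d i) => φ x k ≠ 0)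
      = E.sigma (fun _ => Finset.univ) := by
    ext ⟨i, j⟩
    simp only [Finset.mem_filter, Finset.mem_sigma, Finset.mem_univ, true_and, and_true, hE]
    rw [hφ, hiter]
    exact ⟨fun h h0 => h (by rw [h0]; exact zero_pow (pow_pos hq0 _).ne'),
           fun h => pow_ne_zero _ h⟩
  rw [hfilter, Finset.card_sigma]
  simp only [Finset.card_univ, Fintype.card_fin]
  set S := ∑ i ∈ Finset.Icc (a + 1) μ, (i - a) * ν i with hS
  have hdμ : ∀ j, d j ≤ μ := fun j => hμ ▸ Finset.le_sup (Finset.mem_univ j)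
  have hsum2 : ∑ j : Fin s, (d j - a) = S := by
    have h1 : ∑ i ∈ Finset.Icc 0 μ,
        ∑ j ∈ Finset.univ.filter (fun j : Fin s => d j = i), (d j - a)
        = ∑ j : Fin s, (d j - a) :=
      Finset.sum_fiberwise_of_maps_to (fun j _ => by simp [Finset.mem_Icc, hdμ j]) _
    rw [← h1, hS]
    rw [← Finset.sum_subset (s₁ := Finset.Icc (a + 1) μ) ?hsub ?hzero]
    · apply Finset.sum_congr rfl
      intro i _
      rw [hν, Finset.sum_congr rfl (fun j hj => ?_), Finset.sum_const, smul_eq_mul, mul_comm]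
      simp only [Finset.mem_filter] at hj
      rw [hj.2]
    case hsub => intro i hi; simp only [Finset.mem_Icc] at hi ⊢; omega
    case hzero =>
      intro i hi hni
      simp only [Finset.mem_Icc] at hi hni
      apply Finset.sum_eq_zero
      intro j hj
      simp only [Finset.mem_filter] at hj
      omega
  have hb : ∑ i ∈ E, d i ≤ a * E.card + S := by
    calc ∑ i ∈ E, d i ≤ ∑ i ∈ E, (a + (d i - a)) :=
          Finset.sum_le_sum (fun i _ => by omega)
    _ = a * E.card + ∑ i ∈ E, (d i - a) := by
          rw [Finset.sum_add_distrib, Finset.sum_const, smul_eq_mul, mul_comm]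
    _ ≤ a * E.card + S := by
          rw [← hsum2]
          exact Nat.add_le_add_left (Finset.sum_le_sum_of_subset (Finset.subset_univ E)) _
  have hx' : (E.card : ℚ) < ((t : ℚ) + 1 - (S : ℚ)) / (a : ℚ) := by
    have : (E.card : ℤ) < ⌈((t : ℚ) + 1 - (S : ℚ)) / (a : ℚ)⌉ := by linarith
    exact_mod_cast Int.lt_ceil.mp this
  have hfin : a * E.card + S < t + 1 := by
    have ha' : (0 : ℚ) < a := by exact_mod_cast ha
    rw [lt_div_iff₀ ha'] at hx'
    have : ((a * E.card + S : ℕ) : ℚ) < (t : ℚ) + 1 := by push_cast; nlinarith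
    exact_mod_cast this
  omega
end

section
/- (Bad example.) Let s = 18 and take degrees d_1 = ⋯ = d_17 = 1 and d_18 = 4 (total degree n = 21), and let deg G = 13, so W = n − deg G = 8. Then the designed minimum distance is M(8) = min { #S : S ⊆ {1,…,18}, Σ_{i∈S} d_i ≥ 8 } = 5, yet with t = 2 = ⌊(5−1)/2⌋ there exists a vector x ∈ F^18 of Hamming weight w(x) = 1 whose expansion satisfies w(φ(x)) = 4 > t; consequently the number of errors guaranteed correctable by the proposed method, ⌈(t+1 − Σ_{i=a+1}^{μ}(i−a)ν_i)/a⌉ − 1 with a determined by Σ_{i=a+1}^{μ} i·ν_i < t+1 ≤ Σ_{i=a}^{μ} i·ν_i, equals 0. -/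
/-- bad example: Let `s = 18` with degrees
`d_1 = ⋯ = d_17 = 1` and `d_18 = 4` (total degree `n = 21`), over
`F = F_{17^4}` with `σ(x) = x^17`, and `deg G = 13`, so `W = n − deg G = 8`.
Then the designed minimum distance is `M(8) = 5`, yet with
`t = 2 = ⌊(5−1)/2⌋` there exists a vector `x ∈ F^18` of Hamming weight
`w(x) = 1` whose expansion satisfies `w(φ(x)) = 4 > t`; consequently the number
of errors guaranteed correctable by the proposed method,
`⌈(t+1 − Σ_{i=a+1}^{μ}(i−a)ν_i)/a⌉ − 1` with `a` determined by
`Σ_{i=a+1}^{μ} i·ν_i < t+1 ≤ Σ_{i=a}^{μ} i·ν_i`, equals `0`. -/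
theorem bad_example
    (F : Type*) [Field F] [Fintype F] [DecidableEq F]
    (hF : Fintype.card F = 17 ^ 4)
    (σ : F → F) (hσ : ∀ x, σ x = x ^ 17)
    (d : Fin 18 → ℕ) (hd : ∀ i : Fin 18, d i = if (i : ℕ) < 17 then 1 else 4)
    (φ : (Fin 18 → F) → ((Σ i : Fin 18, Fin (d i)) → F))
    (hφ : ∀ x (i : Fin 18) (j : Fin (d i)), φ x ⟨i, j⟩ = σ^[(j : ℕ)] (x i))
    (ν : ℕ → ℕ) (hν : ∀ k, ν k = (Finset.univ.filter (fun j : Fin 18 => d j = k)).card)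
    (μ : ℕ) (hμ : μ = Finset.univ.sup d)
    (t : ℕ) (ht : t = 2)
    (a : ℕ) (ha : 0 < a)
    (halt : ∑ i ∈ Finset.Icc (a + 1) μ, i * ν i < t + 1)
    (hage : t + 1 ≤ ∑ i ∈ Finset.Icc a μ, i * ν i) :
    sInf {k : ℕ | ∃ S : Finset (Fin 18), S.card = k ∧ 8 ≤ ∑ i ∈ S, d i} = 5
    ∧ (∃ x : Fin 18 → F,
        (Finset.univ.filter (fun i : Fin 18 => x i ≠ 0)).card = 1
        ∧ (Finset.univ.filter (fun k : Σ i : Fin 18, Fin (d i) => φ x k ≠ 0)).card = 4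
        ∧ t < 4)
    ∧ ⌈(((t : ℚ) + 1) - ((∑ i ∈ Finset.Icc (a + 1) μ, (i - a) * ν i : ℕ) : ℚ))
          / (a : ℚ)⌉ - 1 = 0 := by

  have hμ4 : μ = 4 := by
    rw [hμ]
    have : d = fun i : Fin 18 => if (i : ℕ) < 17 then 1 else 4 := funext hd
    rw [this]; decide
  have hν1 : ν 1 = 17 := by
    rw [hν]
    have : d = fun i : Fin 18 => if (i : ℕ) < 17 then 1 else 4 := funext hd
    rw [this]; decide
  have hν4 : ν 4 = 1 := by
    rw [hν]
    have : d = fun i : Fin 18 => if (i : ℕ) < 17 then 1 else 4 := funext hd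
    rw [this]; decide
  have ha4 : a = 4 := by
    by_contra hne
    rcases Nat.lt_or_ge a 4 with h | h
    · have hmem : (4 : ℕ) ∈ Finset.Icc (a + 1) μ := by
        rw [hμ4]; simp; omega
      have hle : 4 * ν 4 ≤ ∑ i ∈ Finset.Icc (a + 1) μ, i * ν i :=
        Finset.single_le_sum (f := fun i => i * ν i) (fun i _ => Nat.zero_le _) hmem
      rw [hν4] at hle
      omega
    · have h5 : 5 ≤ a := by omega
      have : Finset.Icc a μ = ∅ := by rw [hμ4]; apply Finset.Icc_eq_empty; omega
      rw [this] at hage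
      simp at hage
  have hmem5 : (5 : ℕ) ∈ {k : ℕ | ∃ S : Finset (Fin 18), S.card = k ∧ 8 ≤ ∑ i ∈ S, d i} := by
    refine ⟨({13, 14, 15, 16, 17} : Finset (Fin 18)), by decide, ?_⟩
    have : d = fun i : Fin 18 => if (i : ℕ) < 17 then 1 else 4 := funext hd
    rw [this]; decide
  refine ⟨?_, ?_, ?_⟩
  · -- sInf = 5
    apply le_antisymm
    · exact Nat.sInf_le hmem5
    · apply le_csInf ⟨5, hmem5⟩
      rintro k ⟨S, hScard, hSsum⟩
      have hb : ∀ i ∈ S, d i ≤ 1 + (if i = (17 : Fin 18) then 3 else 0) := by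
        intro i _
        rw [hd]
        by_cases hi : (i : ℕ) < 17
        · simp [hi]
        · have hi17 : i = (17 : Fin 18) := by
            have h2 := i.isLt
            have h3 : ((17 : Fin 18) : ℕ) = 17 := rfl
            apply Fin.ext
            omega
          subst hi17
          decide
      have hsum := Finset.sum_le_sum hb
      rw [Finset.sum_add_distrib, Finset.sum_const, Finset.sum_ite_eq' S (17 : Fin 18)
        (fun _ => 3)] at hsum
      by_cases h17 : (17 : Fin 18) ∈ S <;> simp [h17, hScard] at hsum <;> omega
  · -- the vector
    have h0 : ∀ n, σ^[n] (0 : F) = 0 :=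
      fun n => Function.iterate_fixed (by rw [hσ]; simp) n
    have h1 : ∀ n, σ^[n] (1 : F) = 1 :=
      fun n => Function.iterate_fixed (by rw [hσ]; simp) n
    refine ⟨fun i => if i = (17 : Fin 18) then 1 else 0, ?_, ?_, by omega⟩
    · have : (Finset.univ.filter fun i : Fin 18 =>
          (if i = (17 : Fin 18) then (1 : F) else 0) ≠ 0) = {(17 : Fin 18)} := by
        ext i
        by_cases hi : i = (17 : Fin 18) <;> simp [hi]
      rw [this]; rfl
    · have key : (Finset.univ.filter fun k : Σ i : Fin 18, Fin (d i) =>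
          φ (fun i => if i = (17 : Fin 18) then (1 : F) else 0) k ≠ 0)
          = Finset.sigma {(17 : Fin 18)} (fun _ => Finset.univ) := by
        ext ⟨i, j⟩
        rw [Finset.mem_filter, Finset.mem_sigma, hφ]
        by_cases hi : i = (17 : Fin 18)
        · simp [hi, h1]
        · simp [hi, h0]
      rw [key, Finset.card_sigma]
      simp only [Finset.sum_singleton, Finset.card_univ, Fintype.card_fin]
      rw [hd]
      decide
  · rw [ha4, hμ4, ht]
    have : Finset.Icc (4 + 1) 4 = ∅ := by decide
    rw [this]
    simp only [Finset.sum_empty, Nat.cast_zero, sub_zero]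
    have hc : ⌈((2 : ℚ) + 1) / (4 : ℚ)⌉ = 1 := by
      rw [Int.ceil_eq_iff] <;> norm_num
    push_cast
    rw [hc]

    rfl
end
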